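/- Let β > 0 and let (d_j)_{j≥0} and (g_j)_{j≥0} be nonnegative real sequences satisfying d_{j+1} ≤ d_j − g_j²/β for all j ≥ 0 and g_j ≥ d_j for all j ≥ 0. Then for every j ≥ 1: d_j < β/j; moreover, for integers 0 ≤ l < j: if l < ⌊(j+1)/2⌋ then min{g_l, g_{l+1}, …, g_j} < 2β/j, and if ⌊(j+1)/2⌋ ≤ l < j then min{g_l, …, g_j} < β/√((l+1)·(j−l)). -/
import Mathlib


/-- Real-sequence lemma (Proposition 2.4 variant, strict version): if
`d (j+1) ≤ d j - (g j)²/β` and `g j ≥ d j` for nonnegative sequences, then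
`d j < β/j` for `j ≥ 1`, and the minimum of `g` over any window `{l, …, j}` obeys
the stated bounds. `⌊(j+1)/2⌋` is natural-number division `(j+1)/2`. -/
theorem stmt_8 (β : ℝ) (hβ : 0 < β) (d g : ℕ → ℝ)
    (hd : ∀ j, 0 ≤ d j) (hg : ∀ j, 0 ≤ g j)
    (hrec : ∀ j, d (j + 1) ≤ d j - (g j) ^ 2 / β)
    (hdom : ∀ j, d j ≤ g j) :
    (∀ j : ℕ, 1 ≤ j → d j < β / j) ∧
    (∀ l j : ℕ, (h : l < j) →
      (l < (j + 1) / 2 →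
        (Finset.Icc l j).inf' (Finset.nonempty_Icc.mpr h.le) g < 2 * β / j) ∧
      ((j + 1) / 2 ≤ l →
        (Finset.Icc l j).inf' (Finset.nonempty_Icc.mpr h.le) g <
          β / Real.sqrt (((l : ℝ) + 1) * ((j : ℝ) - l)))) := by
  have key : ∀ j, d (j + 1) * β ≤ d j * β - (g j) ^ 2 := by
    intro j
    have h := mul_le_mul_of_nonneg_right (hrec j) hβ.le
    rwa [sub_mul, div_mul_cancel₀ _ hβ.ne'] at h
  have hgd : ∀ j, (d j) ^ 2 ≤ (g j) ^ 2 := fun j => pow_le_pow_left₀ (hd j) (hdom j) 2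
  have quarter : ∀ j, d (j + 1) ≤ β / 4 := by
    intro j
    nlinarith [key j, hgd j, sq_nonneg (d j - β / 2), hβ]
  have part1 : ∀ j : ℕ, 1 ≤ j → d j < β / j := by
    intro j hj
    induction j, hj using Nat.le_induction with
    | base =>
      have := quarter 0
      norm_num
      linarith
    | succ n hn ih =>
      rcases eq_or_lt_of_le hn with h1 | h2
      · rw [← h1]
        have := quarter 1
        norm_num
        linarith
      · have hn2 : (2:ℝ) ≤ (n:ℝ) := by exact_mod_cast h2
        have hnpos : (0:ℝ) < (n:ℝ) := by linarith
        have hx : d n * (n:ℝ) < β := (lt_div_iff₀ hnpos).mp ih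
        rw [lt_div_iff₀ (by positivity : (0:ℝ) < ((n+1:ℕ):ℝ))]
        push_cast
        have hdn : d n < β := by
          nlinarith [mul_nonneg (by linarith : (0:ℝ) ≤ (n:ℝ) - 2) (hd n)]
        have hp := mul_pos (show (0:ℝ) < β - d n * n by linarith)
          (show (0:ℝ) < β - d n by linarith)
        nlinarith [key n, hgd n, hd (n+1), sq_nonneg (d n),
          mul_le_mul_of_nonneg_left (key n) (show (0:ℝ) ≤ (n:ℝ) + 1 by linarith),
          mul_le_mul_of_nonneg_left (hgd n) (show (0:ℝ) ≤ (n:ℝ) + 1 by linarith)]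
  have tele : ∀ a N : ℕ, a ≤ N → (∑ i ∈ Finset.Icc a N, (g i) ^ 2) ≤ β * (d a - d (N + 1)) := by
    intro a N h
    induction N, h using Nat.le_induction with
    | base =>
      rw [Finset.Icc_self, Finset.sum_singleton]
      nlinarith [key a]
    | succ N hN ih =>
      rw [Finset.sum_Icc_succ_top (by omega : a ≤ N + 1)]
      nlinarith [key (N + 1)]
  have L : ∀ a j : ℕ, 1 ≤ a → a ≤ j → ∀ H : (Finset.Icc a j).Nonempty,
      ((Finset.Icc a j).inf' H g) ^ 2 * ((a : ℝ) * ((j : ℝ) - a + 1)) < β ^ 2 := by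
    intro a j ha haj H
    set m := (Finset.Icc a j).inf' H g with hm
    have hm0 : 0 ≤ m := by
      obtain ⟨i, hi, hieq⟩ := Finset.exists_mem_eq_inf' H g
      rw [hm, hieq]; exact hg i
    have hcardn : (Finset.Icc a j).card = j + 1 - a := Nat.card_Icc a j
    have hcard : ((Finset.Icc a j).card : ℝ) = (j : ℝ) - a + 1 := by
      rw [hcardn, Nat.cast_sub (by omega)]; push_cast; ring
    have hsum_lb : ((Finset.Icc a j).card : ℝ) * m ^ 2 ≤ ∑ i ∈ Finset.Icc a j, (g i) ^ 2 := by
      have h := Finset.card_nsmul_le_sum (Finset.Icc a j) (fun i => (g i) ^ 2) (m ^ 2)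
        (fun i hi => pow_le_pow_left₀ hm0 (Finset.inf'_le g hi) 2)
      simpa [nsmul_eq_mul] using h
    have hda : d a < β / a := part1 a ha
    have hapos : (0:ℝ) < (a:ℝ) := by exact_mod_cast ha
    have h2 : d a * (a:ℝ) < β := (lt_div_iff₀ hapos).mp hda
    have h1 : ((j:ℝ) - a + 1) * m ^ 2 ≤ β * d a := by
      rw [← hcard]
      nlinarith [tele a j haj, mul_nonneg hβ.le (hd (j + 1)), hsum_lb]
    have h3 := mul_le_mul_of_nonneg_left h1 hapos.le
    have h4 := mul_lt_mul_of_pos_left h2 hβ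
    nlinarith [h3, h4]
  refine ⟨part1, ?_⟩
  intro l j hlj
  have hml0 : 0 ≤ (Finset.Icc l j).inf' (Finset.nonempty_Icc.mpr hlj.le) g := by
    obtain ⟨i, hi, hieq⟩ := Finset.exists_mem_eq_inf' (Finset.nonempty_Icc.mpr hlj.le) g
    rw [hieq]; exact hg i
  set ml := (Finset.Icc l j).inf' (Finset.nonempty_Icc.mpr hlj.le) g with hmldef
  constructor
  · intro hl
    set a := (j + 1) / 2 with hadef
    have ha1 : 1 ≤ a := by omega
    have haj : a ≤ j := by omega
    have Hne : (Finset.Icc a j).Nonempty := Finset.nonempty_Icc.mpr haj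
    have hL := L a j ha1 haj Hne
    set ma := (Finset.Icc a j).inf' Hne g with hmadef
    have hle : ml ≤ ma := by
      obtain ⟨i, hi, hieq⟩ := Finset.exists_mem_eq_inf' Hne g
      rw [hmadef, hieq]
      refine Finset.inf'_le g ?_
      simp only [Finset.mem_Icc] at hi ⊢
      omega
    have h2a : 2 * a = j ∨ 2 * a = j + 1 := by omega
    have hR : ((j:ℝ)) ^ 2 ≤ 4 * ((a:ℝ) * ((j:ℝ) - a + 1)) := by
      rcases h2a with h | h
      · have hc : 2 * (a:ℝ) = (j:ℝ) := by exact_mod_cast h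
        nlinarith [Nat.cast_nonneg (α := ℝ) a]
      · have hc : 2 * (a:ℝ) = (j:ℝ) + 1 := by exact_mod_cast h
        nlinarith [Nat.cast_nonneg (α := ℝ) j]
    have hjpos : (0:ℝ) < (j:ℝ) := by exact_mod_cast (by omega : 0 < j)
    rw [lt_div_iff₀ hjpos]
    have hml2 : ml ^ 2 ≤ ma ^ 2 := pow_le_pow_left₀ hml0 hle 2
    have hsq : (ml * (j:ℝ)) ^ 2 < (2 * β) ^ 2 := by
      have e1 : ml ^ 2 * (j:ℝ) ^ 2 ≤ ma ^ 2 * (4 * ((a:ℝ) * ((j:ℝ) - a + 1))) := by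
        nlinarith [mul_nonneg (sub_nonneg.2 hml2) (sq_nonneg (j:ℝ)),
          mul_nonneg (sq_nonneg ma) (sub_nonneg.2 hR)]
      nlinarith [hL, e1]
    exact lt_of_pow_lt_pow_left₀ 2 (by positivity) hsq
  · intro hl
    have hl1 : 1 ≤ l := by omega
    have hL := L l j hl1 hlj.le (Finset.nonempty_Icc.mpr hlj.le)
    have h2l : (j:ℝ) ≤ 2 * (l:ℝ) := by exact_mod_cast (by omega : j ≤ 2 * l)
    have hjl : (l:ℝ) + 1 ≤ (j:ℝ) := by exact_mod_cast hlj
    have hX : (0:ℝ) < ((l:ℝ) + 1) * ((j:ℝ) - (l:ℝ)) := by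
      apply mul_pos <;> [positivity; linarith]
    rw [lt_div_iff₀ (Real.sqrt_pos.mpr hX)]
    apply lt_of_pow_lt_pow_left₀ 2 hβ.le
    rw [mul_pow, Real.sq_sqrt hX.le]
    have hXle : ((l:ℝ) + 1) * ((j:ℝ) - l) ≤ (l:ℝ) * ((j:ℝ) - l + 1) := by nlinarith
    nlinarith [hL, sq_nonneg ml]
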